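/- arXiv:2405.14429 — 4 statements merged into one kernel-verified Lean document; each statement's English description precedes it below -/
import Mathlib

section
/- Let A ∈ ℝ^{d×d} be Hurwitz and B ∈ ℝ^{d×m}. Then the integral Σ = ∫₀^∞ exp(As)·B·Bᵀ·exp(Aᵀs) ds converges, and Σ satisfies the Lyapunov equation AΣ + ΣAᵀ = −BBᵀ. -/
open Matrix MeasureTheory

attribute [local instance] Matrix.linftyOpNormedAddCommGroup Matrix.linftyOpNormedRing
  Matrix.linftyOpNormedAlgebra

/-- A real square matrix is Hurwitz if all of its complex eigenvalues have
negative real part. -/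
def IsHurwitz {d : ℕ} (A : Matrix (Fin d) (Fin d) ℝ) : Prop :=
  ∀ μ ∈ spectrum ℂ (A.map (algebraMap ℝ ℂ)), μ.re < 0

namespace LyapAux

variable {d n₁ n₂ : ℕ}

/-- entry bound for the linfty operator norm -/
lemma norm_entry_le {α : Type*} [NormedAddCommGroup α] (X : Matrix (Fin n₁) (Fin n₂) α)
    (i : Fin n₁) (j : Fin n₂) : ‖X i j‖ ≤ ‖X‖ := by
  have h1 : ‖X i j‖₊ ≤ ∑ j', ‖X i j'‖₊ := Finset.single_le_sum (f := fun j' => ‖X i j'‖₊) (fun _ _ => zero_le) (Finset.mem_univ j)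
  have h2 : (∑ j', ‖X i j'‖₊) ≤ Finset.univ.sup fun i : Fin n₁ => ∑ j', ‖X i j'‖₊ :=
    Finset.le_sup (f := fun i : Fin n₁ => ∑ j', ‖X i j'‖₊) (Finset.mem_univ i)
  have := h1.trans h2
  rw [Matrix.linfty_opNorm_def]
  exact_mod_cast this

lemma norm_le_of_rows {α : Type*} [NormedAddCommGroup α] (X : Matrix (Fin n₁) (Fin n₂) α)
    {r : ℝ} (h0 : 0 ≤ r) (h : ∀ i, (∑ j, ‖X i j‖) ≤ r) : ‖X‖ ≤ r := by
  rw [Matrix.linfty_opNorm_def]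
  have : (Finset.univ.sup fun i : Fin n₁ => ∑ j, ‖X i j‖₊) ≤ ⟨r, h0⟩ := by
    refine Finset.sup_le fun i _ => ?_
    have := h i
    refine NNReal.coe_le_coe.mp (?_ : ((∑ j, ‖X i j‖₊ : NNReal) : ℝ) ≤ r)
    simpa [NNReal.coe_sum] using this
  exact_mod_cast this

lemma norm_map_ofReal (X : Matrix (Fin n₁) (Fin n₂) ℝ) :
    ‖X.map (algebraMap ℝ ℂ)‖ = ‖X‖ := by
  rw [Matrix.linfty_opNorm_def, Matrix.linfty_opNorm_def]
  congr 1
  refine Finset.sup_congr rfl fun i _ => ?_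
  refine Finset.sum_congr rfl fun j _ => ?_
  simp [Matrix.map_apply, Complex.nnnorm_real]

lemma norm_transpose_le (X : Matrix (Fin d) (Fin d) ℝ) : ‖Xᵀ‖ ≤ d * ‖X‖ := by
  refine norm_le_of_rows _ (by positivity) fun j => ?_
  calc (∑ i, ‖Xᵀ j i‖) ≤ ∑ _i : Fin d, ‖X‖ :=
        Finset.sum_le_sum fun i _ => by simpa using norm_entry_le X i j
    _ = d * ‖X‖ := by simp [mul_comm]




variable {d : ℕ}

lemma exp_smul_nilp_mulVec (N : Matrix (Fin d) (Fin d) ℂ) (x : Fin d → ℂ) (k : ℕ)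
    (hk : (N ^ k) *ᵥ x = 0) (t : ℝ) :
    NormedSpace.exp (t • N) *ᵥ x
      = ∑ n ∈ Finset.range k, (((n.factorial : ℂ))⁻¹ * (t : ℂ) ^ n) • (N ^ n *ᵥ x) := by
  classical
  let L : Matrix (Fin d) (Fin d) ℂ →ₗ[ℂ] (Fin d → ℂ) :=
    { toFun := fun P => P *ᵥ x
      map_add' := fun P Q => Matrix.add_mulVec P Q x
      map_smul' := fun c P => Matrix.smul_mulVec c P x }
  let L' := LinearMap.toContinuousLinearMap L
  have hs : HasSum (fun n : ℕ => ((n.factorial : ℂ))⁻¹ • (t • N) ^ n)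
      (NormedSpace.exp (t • N)) := NormedSpace.exp_series_hasSum_exp' (𝕂 := ℂ) (t • N)
  have hs2 := hs.mapL L'
  have hterm : ∀ n : ℕ, L' (((n.factorial : ℂ))⁻¹ • (t • N) ^ n)
      = (((n.factorial : ℂ))⁻¹ * (t : ℂ) ^ n) • (N ^ n *ᵥ x) := by
    intro n
    have h1 : (t • N) ^ n = (t : ℂ) ^ n • N ^ n := by
      rw [show t • N = (t : ℂ) • N by
        ext i j; simp [Matrix.smul_apply, Complex.real_smul], smul_pow]
    rw [h1, _root_.map_smul, _root_.map_smul, smul_smul]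
    rfl
  have hzero : ∀ n ∉ Finset.range k,
      (((n.factorial : ℂ))⁻¹ * (t : ℂ) ^ n) • (N ^ n *ᵥ x) = 0 := by
    intro n hn
    rw [Finset.mem_range, not_lt] at hn
    have : N ^ n *ᵥ x = 0 := by
      have : N ^ n = N ^ (n - k) * N ^ k := by rw [← pow_add]; congr 1; omega
      rw [this, ← Matrix.mulVec_mulVec, hk, Matrix.mulVec_zero]
    rw [this, smul_zero]
  have hs3 : HasSum (fun n : ℕ => (((n.factorial : ℂ))⁻¹ * (t : ℂ) ^ n) • (N ^ n *ᵥ x))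
      (L' (NormedSpace.exp (t • N))) := by
    exact hs2.congr_fun fun n => (hterm n).symm
  have hs4 : HasSum (fun n : ℕ => (((n.factorial : ℂ))⁻¹ * (t : ℂ) ^ n) • (N ^ n *ᵥ x))
      (∑ n ∈ Finset.range k, (((n.factorial : ℂ))⁻¹ * (t : ℂ) ^ n) • (N ^ n *ᵥ x)) :=
    hasSum_sum_of_ne_finset_zero hzero
  exact (hs3.unique hs4)

lemma real_smul_eq (t : ℝ) (P : Matrix (Fin d) (Fin d) ℂ) : t • P = (t : ℂ) • P := by
  ext i j; simp [Matrix.smul_apply, Complex.real_smul]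

lemma exp_smul_split (M : Matrix (Fin d) (Fin d) ℂ) (μ : ℂ) (t : ℝ) :
    NormedSpace.exp (t • M)
      = Complex.exp ((t : ℂ) * μ) • NormedSpace.exp (t • (M - μ • 1)) := by
  set c : ℂ := (t : ℂ)
  have hsplit : c • M = c • (M - μ • 1) + (c * μ) • 1 := by
    rw [smul_sub, smul_smul, sub_add_cancel]
  have hcomm : Commute (c • (M - μ • 1)) ((c * μ) • (1 : Matrix (Fin d) (Fin d) ℂ)) :=
    ((Commute.one_right (M - μ • 1)).smul_left c).smul_right (c * μ)
  have hexp1 : NormedSpace.exp ((c * μ) • (1 : Matrix (Fin d) (Fin d) ℂ))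
      = Complex.exp (c * μ) • (1 : Matrix (Fin d) (Fin d) ℂ) := by
    rw [← Algebra.algebraMap_eq_smul_one, ← (show
        algebraMap ℂ (Matrix (Fin d) (Fin d) ℂ) (NormedSpace.exp (c * μ))
          = NormedSpace.exp (algebraMap ℂ (Matrix (Fin d) (Fin d) ℂ) (c * μ)) from
        NormedSpace.algebraMap_exp_comm (c * μ)),
      Algebra.algebraMap_eq_smul_one, Complex.exp_eq_exp_ℂ]
  rw [real_smul_eq, real_smul_eq, hsplit, (show NormedSpace.exp (c • (M - μ • 1) + (c * μ) • 1)
      = NormedSpace.exp (c • (M - μ • 1)) * NormedSpace.exp ((c * μ) • 1) from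
      NormedSpace.exp_add_of_commute hcomm), hexp1,
    mul_smul_comm, mul_one]

lemma vec_decay (M : Matrix (Fin d) (Fin d) ℂ) {ε : ℝ} (hε : 0 < ε)
    (hspec : ∀ μ ∈ spectrum ℂ M, μ.re ≤ -(2 * ε)) (v : Fin d → ℂ) :
    ∃ C : ℝ, 0 ≤ C ∧ ∀ t : ℝ, 0 ≤ t →
      ‖NormedSpace.exp (t • M) *ᵥ v‖ ≤ C * Real.exp (-ε * t) := by
  classical
  have htop := Module.End.iSup_maxGenEigenspace_eq_top (Matrix.toLinAlgEquiv' M)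
  have hv : v ∈ ⨆ μ : ℂ, Module.End.maxGenEigenspace (Matrix.toLinAlgEquiv' M) μ := by
    rw [htop]; trivial
  refine Submodule.iSup_induction _ (motive := fun v => ∃ C : ℝ, 0 ≤ C ∧ ∀ t : ℝ, 0 ≤ t →
      ‖NormedSpace.exp (t • M) *ᵥ v‖ ≤ C * Real.exp (-ε * t)) hv ?_ ?_ ?_
  · -- mem case
    intro μ x hx
    by_cases hμ : μ ∈ spectrum ℂ M
    · obtain ⟨k, hk⟩ := (Module.End.mem_maxGenEigenspace _ _ _).mp hx
      have hk' : ((M - μ • 1) ^ k) *ᵥ x = 0 := by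
        have h2 : (Matrix.toLinAlgEquiv' ((M - μ • 1) ^ k)) x = 0 := by
          rw [map_pow, map_sub, _root_.map_smul, _root_.map_one]; exact hk
        simpa only [Matrix.toLinAlgEquiv'_apply] using h2
      set N := M - μ • 1 with hN
      set C : ℝ := ∑ n ∈ Finset.range k, ‖N ^ n *ᵥ x‖ / ε ^ n with hC
      have hC0 : 0 ≤ C := Finset.sum_nonneg fun n _ => by positivity
      refine ⟨C, hC0, fun t ht => ?_⟩
      rw [exp_smul_split M μ t, Matrix.smul_mulVec, norm_smul,
        exp_smul_nilp_mulVec N x k hk' t]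
      have hnorm_e : ‖Complex.exp ((t : ℂ) * μ)‖ = Real.exp (t * μ.re) := by
        rw [Complex.norm_exp]
        congr 1
        simp [Complex.mul_re]
      have hsum : ‖∑ n ∈ Finset.range k, (((n.factorial : ℂ))⁻¹ * (t : ℂ) ^ n) • (N ^ n *ᵥ x)‖
          ≤ C * Real.exp (ε * t) := by
        refine (norm_sum_le _ _).trans ?_
        rw [hC, Finset.sum_mul]
        refine Finset.sum_le_sum fun n _ => ?_
        rw [norm_smul]
        have h1 : ‖((n.factorial : ℂ))⁻¹ * (t : ℂ) ^ n‖ = t ^ n / n.factorial := by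
          rw [norm_mul, norm_inv, norm_pow, Complex.norm_natCast, Complex.norm_real,
            Real.norm_eq_abs, abs_of_nonneg ht]
          ring
        have h2 : t ^ n / n.factorial ≤ Real.exp (ε * t) / ε ^ n := by
          have h3 := Real.pow_div_factorial_le_exp (x := ε * t) (by positivity) n
          rw [div_le_iff₀ (by positivity : (0:ℝ) < (n.factorial : ℝ))] at h3
          rw [div_le_div_iff₀ (by positivity) (by positivity)]
          calc t ^ n * ε ^ n = (ε * t) ^ n := by rw [mul_pow]; ring
            _ ≤ Real.exp (ε * t) * n.factorial := h3
        calc ‖((n.factorial:ℂ))⁻¹ * (t:ℂ)^n‖ * ‖N ^ n *ᵥ x‖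
            = (t ^ n / n.factorial) * ‖N ^ n *ᵥ x‖ := by rw [h1]
          _ ≤ (Real.exp (ε * t) / ε ^ n) * ‖N ^ n *ᵥ x‖ := by gcongr
          _ = ‖N ^ n *ᵥ x‖ / ε ^ n * Real.exp (ε * t) := by ring
      calc ‖Complex.exp ((t:ℂ)*μ)‖ * ‖∑ n ∈ Finset.range k, (((n.factorial : ℂ))⁻¹ * (t : ℂ) ^ n) • (N ^ n *ᵥ x)‖
          ≤ Real.exp (t * μ.re) * (C * Real.exp (ε * t)) := by
            rw [hnorm_e]
            exact mul_le_mul_of_nonneg_left hsum (Real.exp_nonneg _)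
        _ ≤ Real.exp (t * (-(2*ε))) * (C * Real.exp (ε * t)) := by
            have hle : Real.exp (t * μ.re) ≤ Real.exp (t * (-(2*ε))) :=
              Real.exp_le_exp.mpr (by nlinarith [hspec μ hμ])
            exact mul_le_mul_of_nonneg_right hle (by positivity)
        _ = C * Real.exp (-ε * t) := by
            rw [show Real.exp (t*(-(2*ε))) * (C * Real.exp (ε*t))
                = C * (Real.exp (t*(-(2*ε))) * Real.exp (ε*t)) from by ring,
              ← Real.exp_add, show t*(-(2*ε)) + ε*t = -ε*t from by ring]
    · -- μ not in spectrum: x = 0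
      have hbot : Module.End.maxGenEigenspace (Matrix.toLinAlgEquiv' M) μ = ⊥ := by
        by_contra hne
        have h1 : Module.End.HasUnifEigenvalue (Matrix.toLinAlgEquiv' M) μ ⊤ := hne
        have h2 := Module.End.HasUnifEigenvalue.lt (m := 1) zero_lt_one h1
        have h3 := Module.End.hasUnifEigenvalue_iff_mem_spectrum.mp h2
        rw [AlgEquiv.spectrum_eq] at h3
        exact hμ h3
      rw [hbot, Submodule.mem_bot] at hx
      subst hx
      exact ⟨0, le_rfl, fun t ht => by simp [Matrix.mulVec_zero]⟩
  · exact ⟨0, le_rfl, fun t ht => by simp [Matrix.mulVec_zero]⟩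
  · rintro x y ⟨C₁, hC₁, h₁⟩ ⟨C₂, hC₂, h₂⟩
    refine ⟨C₁ + C₂, by positivity, fun t ht => ?_⟩
    rw [Matrix.mulVec_add, add_mul]
    exact (norm_add_le _ _).trans (add_le_add (h₁ t ht) (h₂ t ht))



lemma matrix_decay_complex (M : Matrix (Fin d) (Fin d) ℂ) {ε : ℝ} (hε : 0 < ε)
    (hspec : ∀ μ ∈ spectrum ℂ M, μ.re ≤ -(2 * ε)) :
    ∃ C : ℝ, 0 ≤ C ∧ ∀ t : ℝ, 0 ≤ t →
      ‖NormedSpace.exp (t • M)‖ ≤ C * Real.exp (-ε * t) := by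
  classical
  choose C hC0 hC using fun j : Fin d => vec_decay M hε hspec (Pi.single j 1)
  have hCsum : 0 ≤ ∑ j, C j := Finset.sum_nonneg fun j _ => hC0 j
  refine ⟨∑ j, C j, hCsum, fun t ht => ?_⟩
  refine norm_le_of_rows _ (mul_nonneg hCsum (Real.exp_nonneg _)) fun i => ?_
  have hentry : ∀ j, ‖NormedSpace.exp (t • M) i j‖ ≤ C j * Real.exp (-ε * t) := by
    intro j
    have h1 : NormedSpace.exp (t • M) i j
        = (NormedSpace.exp (t • M) *ᵥ Pi.single j 1) i := by
      simp [Matrix.mulVec_single]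
    rw [h1]
    exact (norm_le_pi_norm _ i).trans (hC j t ht)
  calc (∑ j, ‖NormedSpace.exp (t • M) i j‖) ≤ ∑ j, C j * Real.exp (-ε * t) :=
        Finset.sum_le_sum fun j _ => hentry j
    _ = (∑ j, C j) * Real.exp (-ε * t) := by rw [← Finset.sum_mul]

lemma real_decay (A : Matrix (Fin d) (Fin d) ℝ)
    (hA : ∀ μ ∈ spectrum ℂ (A.map (algebraMap ℝ ℂ)), μ.re < 0) :
    ∃ ε : ℝ, 0 < ε ∧ ∃ C : ℝ, 0 ≤ C ∧ ∀ t : ℝ, 0 ≤ t →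
      ‖NormedSpace.exp (t • A)‖ ≤ C * Real.exp (-ε * t) := by
  classical
  set M := A.map (algebraMap ℝ ℂ) with hM
  obtain ⟨ε, hε, hspec⟩ : ∃ ε : ℝ, 0 < ε ∧ ∀ μ ∈ spectrum ℂ M, μ.re ≤ -(2 * ε) := by
    have hfin := Matrix.finite_spectrum (R := ℂ) M
    by_cases hne : (spectrum ℂ M).Nonempty
    · have hFne : (hfin.toFinset).Nonempty := by
        rwa [Set.Finite.toFinset_nonempty]
      have hFne' := hFne.image Complex.re
      set r := ((hfin.toFinset).image Complex.re).max' hFne' with hrdef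
      have hr : r < 0 := by
        obtain ⟨μ, hμ, hμr⟩ := Finset.mem_image.mp
          (((hfin.toFinset).image Complex.re).max'_mem hFne')
        have : r = μ.re := by rw [hrdef, hμr]
        rw [this]
        exact hA μ (hfin.mem_toFinset.mp hμ)
      refine ⟨-r / 2, by linarith, fun μ hμ => ?_⟩
      have hle : μ.re ≤ r := Finset.le_max' _ _
        (Finset.mem_image_of_mem _ (hfin.mem_toFinset.mpr hμ))
      linarith
    · exact ⟨1, one_pos, fun μ hμ => absurd ⟨μ, hμ⟩ hne⟩
  obtain ⟨C, hC0, hC⟩ := matrix_decay_complex M hε hspec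
  refine ⟨ε, hε, C, hC0, fun t ht => ?_⟩
  have hcont : Continuous ((algebraMap ℝ ℂ).mapMatrix :
      Matrix (Fin d) (Fin d) ℝ →+* Matrix (Fin d) (Fin d) ℂ) := by
    show Continuous fun X : Matrix (Fin d) (Fin d) ℝ => X.map (algebraMap ℝ ℂ)
    exact Continuous.matrix_map continuous_id (continuous_algebraMap ℝ ℂ)
  have hmap : (NormedSpace.exp (t • A)).map (algebraMap ℝ ℂ)
      = NormedSpace.exp (t • M) := by
    have h0 := NormedSpace.map_exp ((algebraMap ℝ ℂ).mapMatrix) hcont (t • A)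
    have h2 : ((algebraMap ℝ ℂ).mapMatrix (t • A)) = t • M := by
      ext i j
      simp only [RingHom.mapMatrix_apply, Matrix.map_apply, Matrix.smul_apply, hM,
        smul_eq_mul, Complex.real_smul, Complex.ofReal_mul, _root_.map_mul, Complex.coe_algebraMap]
    rw [RingHom.mapMatrix_apply] at h0
    rw [h2] at h0
    exact h0
  calc ‖NormedSpace.exp (t • A)‖ = ‖NormedSpace.exp (t • M)‖ := by
        rw [← hmap, norm_map_ofReal]
    _ ≤ C * Real.exp (-ε * t) := hC t ht



end LyapAux

set_option maxHeartbeats 1000000 in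
theorem lyapunov_gramian {d m : ℕ} (A : Matrix (Fin d) (Fin d) ℝ)
    (B : Matrix (Fin d) (Fin m) ℝ) (hA : IsHurwitz A) :
    @IntegrableOn _ _ _ UniformSpace.toTopologicalSpace SeminormedAddGroup.toContinuousENorm
      (fun s : ℝ => NormedSpace.exp (s • A) * B * Bᵀ * NormedSpace.exp (s • Aᵀ))
      (Set.Ioi 0) volume ∧
    A * (∫ s in Set.Ioi (0:ℝ),
          NormedSpace.exp (s • A) * B * Bᵀ * NormedSpace.exp (s • Aᵀ)) +
      (∫ s in Set.Ioi (0:ℝ),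
          NormedSpace.exp (s • A) * B * Bᵀ * NormedSpace.exp (s • Aᵀ)) * Aᵀ
      = -(B * Bᵀ) := by
  classical
  obtain ⟨ε, hε, C, hC0, hC⟩ := LyapAux.real_decay A hA
  set Q : Matrix (Fin d) (Fin d) ℝ := B * Bᵀ with hQ
  set g : ℝ → Matrix (Fin d) (Fin d) ℝ :=
    fun s => NormedSpace.exp (s • A) * Q * NormedSpace.exp (s • Aᵀ) with hg
  have hFg : (fun s : ℝ => NormedSpace.exp (s • A) * B * Bᵀ * NormedSpace.exp (s • Aᵀ))
      = g := by
    funext s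
    rw [hg, hQ]
    simp only [Matrix.mul_assoc]
  set K : ℝ := C * ‖Q‖ * (d * C) with hK
  have hK0 : 0 ≤ K := by positivity
  have hcont_e1 : Continuous fun s : ℝ => NormedSpace.exp (s • A) :=
    NormedSpace.exp_continuous.comp (continuous_id.smul continuous_const)
  have hcont_e2 : Continuous fun s : ℝ => NormedSpace.exp (s • Aᵀ) :=
    NormedSpace.exp_continuous.comp (continuous_id.smul continuous_const)
  have hgcont : Continuous g := (hcont_e1.mul continuous_const).mul hcont_e2
  have hgbound : ∀ s : ℝ, 0 ≤ s → ‖g s‖ ≤ K * Real.exp (-(2 * ε) * s) := by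
    intro s hs
    have h1 := hC s hs
    have h2 : ‖NormedSpace.exp (s • Aᵀ)‖ ≤ d * (C * Real.exp (-ε * s)) := by
      have h3 : (s • Aᵀ) = (s • A)ᵀ := by rw [Matrix.transpose_smul]
      rw [h3, Matrix.exp_transpose]
      refine (LyapAux.norm_transpose_le _).trans ?_
      exact mul_le_mul_of_nonneg_left h1 (by positivity)
    calc ‖g s‖ ≤ ‖NormedSpace.exp (s • A) * Q‖ * ‖NormedSpace.exp (s • Aᵀ)‖ :=
          norm_mul_le _ _
      _ ≤ (‖NormedSpace.exp (s • A)‖ * ‖Q‖) * ‖NormedSpace.exp (s • Aᵀ)‖ := by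
          exact mul_le_mul_of_nonneg_right (norm_mul_le _ _) (norm_nonneg _)
      _ ≤ ((C * Real.exp (-ε * s)) * ‖Q‖) * (d * (C * Real.exp (-ε * s))) := by
          refine mul_le_mul ?_ h2 (norm_nonneg _) (by positivity)
          exact mul_le_mul_of_nonneg_right h1 (norm_nonneg _)
      _ = K * (Real.exp (-ε * s) * Real.exp (-ε * s)) := by rw [hK]; ring
      _ = K * Real.exp (-(2 * ε) * s) := by
          rw [← Real.exp_add]
          congr 1
          ring
  have hKint : IntegrableOn (fun s : ℝ => K * Real.exp (-(2 * ε) * s)) (Set.Ioi (0:ℝ)) :=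
    (exp_neg_integrableOn_Ioi 0 (by positivity : (0:ℝ) < 2 * ε)).const_mul _
  have hgint : @IntegrableOn _ _ _ UniformSpace.toTopologicalSpace
      SeminormedAddGroup.toContinuousENorm g (Set.Ioi (0:ℝ)) volume := by
    refine Integrable.mono' hKint (show @Continuous ℝ _ _
      PseudoMetricSpace.toUniformSpace.toTopologicalSpace g from hgcont).aestronglyMeasurable.restrict ?_
    rw [ae_restrict_iff' measurableSet_Ioi]
    exact Filter.Eventually.of_forall fun s hs => hgbound s hs.le
  have hderiv : ∀ s : ℝ, HasDerivAt g (A * g s + g s * Aᵀ) s := by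
    intro s
    have h1 : HasDerivAt (fun t : ℝ => NormedSpace.exp (t • A))
        (A * NormedSpace.exp (s • A)) s := by
      exact hasDerivAt_exp_smul_const' (𝕂 := ℝ) A s
    have h2 : HasDerivAt (fun t : ℝ => NormedSpace.exp (t • Aᵀ))
        (NormedSpace.exp (s • Aᵀ) * Aᵀ) s := by
      exact hasDerivAt_exp_smul_const (𝕂 := ℝ) Aᵀ s
    have h3 : HasDerivAt g (A * NormedSpace.exp (s • A) * Q * NormedSpace.exp (s • Aᵀ) +
        NormedSpace.exp (s • A) * Q * (NormedSpace.exp (s • Aᵀ) * Aᵀ)) s := (h1.mul_const Q).mul h2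
    convert h3 using 1
    rw [hg]
    simp only [Matrix.mul_assoc]
  have hlim : Filter.Tendsto g Filter.atTop (nhds 0) := by
    have h0 : Filter.Tendsto (fun s : ℝ => -(2 * ε) * s) Filter.atTop Filter.atBot :=
      Filter.Tendsto.const_mul_atTop_of_neg (by linarith) Filter.tendsto_id
    have h1 : Filter.Tendsto (fun s : ℝ => K * Real.exp (-(2 * ε) * s))
        Filter.atTop (nhds 0) := by
      have h2 := (Real.tendsto_exp_atBot.comp h0).const_mul K
      simpa using h2
    refine squeeze_zero_norm' ?_ h1
    filter_upwards [Filter.eventually_ge_atTop (0:ℝ)] with s hs using hgbound s hs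
  let Lmul : Matrix (Fin d) (Fin d) ℝ →L[ℝ] Matrix (Fin d) (Fin d) ℝ :=
    LinearMap.toContinuousLinearMap (LinearMap.mulLeft ℝ A)
  let Rmul : Matrix (Fin d) (Fin d) ℝ →L[ℝ] Matrix (Fin d) (Fin d) ℝ :=
    LinearMap.toContinuousLinearMap (LinearMap.mulRight ℝ Aᵀ)
  have hLmul : ∀ X, Lmul X = A * X := fun X => rfl
  have hRmul : ∀ X, Rmul X = X * Aᵀ := fun X => rfl
  have hint2 : @IntegrableOn _ _ _ UniformSpace.toTopologicalSpace
      SeminormedAddGroup.toContinuousENorm (fun s : ℝ => A * g s) (Set.Ioi (0:ℝ)) volume := by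
    have := ContinuousLinearMap.integrable_comp Lmul hgint
    exact this
  have hint3 : @IntegrableOn _ _ _ UniformSpace.toTopologicalSpace
      SeminormedAddGroup.toContinuousENorm (fun s : ℝ => g s * Aᵀ) (Set.Ioi (0:ℝ)) volume := by
    have := ContinuousLinearMap.integrable_comp Rmul hgint
    exact this
  have hFTC : (∫ s in Set.Ioi (0:ℝ), (A * g s + g s * Aᵀ)) = 0 - g 0 :=
    integral_Ioi_of_hasDerivAt_of_tendsto' (fun s _ => hderiv s) (hint2.add hint3) hlim
  have hg0 : g 0 = Q := by
    rw [hg]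
    simp [NormedSpace.exp_zero]
  have hsplit : (∫ s in Set.Ioi (0:ℝ), (A * g s + g s * Aᵀ))
      = A * (∫ s in Set.Ioi (0:ℝ), g s) + (∫ s in Set.Ioi (0:ℝ), g s) * Aᵀ := by
    rw [integral_add hint2 hint3]
    congr 1
    · have := ContinuousLinearMap.integral_comp_comm Lmul hgint
      exact this
    · have := ContinuousLinearMap.integral_comp_comm Rmul hgint
      exact this
  constructor
  · rw [hFg]
    exact hgint
  · rw [hFg, hsplit.symm.trans hFTC, hg0, zero_sub]
end

section
/- For symmetric positive definite C₁, C₂ ∈ ℝ^{d×d}, the matrix identity ‖M⁻¹(C₁⁻²z + C₂⁻²w)‖² − ‖C₁⁻¹z‖² − ‖C₂⁻¹w‖² = −(z−w)ᵀ(C₁² + C₂²)⁻¹(z−w) holds for all z, w ∈ ℝ^d, where M = (C₁⁻² + C₂⁻²)^{1/2}. -/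
open Matrix

private lemma dp_helper {d : ℕ} (P Q : Matrix (Fin d) (Fin d) ℝ) (x y : Fin d → ℝ) :
    (P *ᵥ x) ⬝ᵥ (Q *ᵥ y) = x ⬝ᵥ ((Pᵀ * Q) *ᵥ y) := by
  rw [dotProduct_mulVec, ← mulVec_transpose, mulVec_mulVec, dotProduct_comm,
    dotProduct_mulVec, ← mulVec_transpose, transpose_mul, transpose_transpose,
    dotProduct_comm]

theorem gaussian_cross_term_identity {d : ℕ} (C₁ C₂ M : Matrix (Fin d) (Fin d) ℝ)
    (hC₁ : C₁.PosDef) (hC₂ : C₂.PosDef) (hM : M.PosDef)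
    (hM2 : M ^ 2 = C₁⁻¹ ^ 2 + C₂⁻¹ ^ 2) (z w : Fin d → ℝ) :
    (M⁻¹.mulVec ((C₁⁻¹ ^ 2).mulVec z + (C₂⁻¹ ^ 2).mulVec w)) ⬝ᵥ
        (M⁻¹.mulVec ((C₁⁻¹ ^ 2).mulVec z + (C₂⁻¹ ^ 2).mulVec w)) -
      (C₁⁻¹.mulVec z) ⬝ᵥ (C₁⁻¹.mulVec z) - (C₂⁻¹.mulVec w) ⬝ᵥ (C₂⁻¹.mulVec w)
      = -((z - w) ⬝ᵥ ((C₁ ^ 2 + C₂ ^ 2)⁻¹).mulVec (z - w)) := by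
  set A := C₁⁻¹ ^ 2 with hA
  set B := C₂⁻¹ ^ 2 with hB
  set S := (A + B)⁻¹ with hS
  set K := A * S * B with hK
  -- symmetry facts
  have hC₁t : C₁ᵀ = C₁ := hC₁.isHermitian.eq
  have hC₂t : C₂ᵀ = C₂ := hC₂.isHermitian.eq
  have hMt : Mᵀ = M := hM.isHermitian.eq
  have hC₁it : (C₁⁻¹)ᵀ = C₁⁻¹ := by rw [transpose_nonsing_inv, hC₁t]
  have hC₂it : (C₂⁻¹)ᵀ = C₂⁻¹ := by rw [transpose_nonsing_inv, hC₂t]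
  have hMit : (M⁻¹)ᵀ = M⁻¹ := by rw [transpose_nonsing_inv, hMt]
  have hAt : Aᵀ = A := by rw [hA, sq, transpose_mul, hC₁it, ← sq]
  have hBt : Bᵀ = B := by rw [hB, sq, transpose_mul, hC₂it, ← sq]
  -- invertibility facts
  have hdM : IsUnit M.det := isUnit_iff_ne_zero.mpr hM.det_pos.ne'
  have hdAB : IsUnit (A + B).det := by
    rw [← hM2, sq, det_mul]; exact hdM.mul hdM
  have hAinv : A = (C₁ ^ 2)⁻¹ := by rw [hA, sq, sq, Matrix.mul_inv_rev]
  have hBinv : B = (C₂ ^ 2)⁻¹ := by rw [hB, sq, sq, Matrix.mul_inv_rev]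
  have hdA : IsUnit A.det := by
    rw [hA, det_pow, det_nonsing_inv]
    exact isUnit_iff_ne_zero.mpr (pow_ne_zero _ (by
      simp [Ring.inverse_eq_inv', inv_ne_zero hC₁.det_pos.ne']))
  have hdB : IsUnit B.det := by
    rw [hB, det_pow, det_nonsing_inv]
    exact isUnit_iff_ne_zero.mpr (pow_ne_zero _ (by
      simp [Ring.inverse_eq_inv', inv_ne_zero hC₂.det_pos.ne']))
  -- key: (C₁^2 + C₂^2)⁻¹ = K
  have hsum : C₁ ^ 2 + C₂ ^ 2 = B⁻¹ * (A + B) * A⁻¹ := by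
    rw [mul_add, add_mul, mul_assoc B⁻¹ A A⁻¹, mul_nonsing_inv _ hdA, mul_one,
      nonsing_inv_mul _ hdB, one_mul, hAinv, hBinv,
      nonsing_inv_nonsing_inv _ (by rw [det_pow]; exact (isUnit_iff_ne_zero.mpr hC₂.det_pos.ne').pow 2),
      nonsing_inv_nonsing_inv _ (by rw [det_pow]; exact (isUnit_iff_ne_zero.mpr hC₁.det_pos.ne').pow 2),
      add_comm]
  have hKey : (C₁ ^ 2 + C₂ ^ 2)⁻¹ = K := by
    rw [hsum, Matrix.mul_inv_rev, Matrix.mul_inv_rev,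
      nonsing_inv_nonsing_inv _ hdA, nonsing_inv_nonsing_inv _ hdB, hK, hS, mul_assoc]
  have hSt : Sᵀ = S := by
    rw [hS, transpose_nonsing_inv, transpose_add, hAt, hBt]
  have hKt : Kᵀ = K := by
    rw [← hKey, transpose_nonsing_inv, transpose_add, transpose_pow, transpose_pow,
      hC₁t, hC₂t]
  -- products
  have hASA : A * S * A = A - K := by
    have h : A * S * (A + B) = A := by
      rw [mul_assoc, nonsing_inv_mul _ hdAB, mul_one]
    rw [mul_add, ← hK] at h
    exact eq_sub_of_add_eq h
  have hBSA : B * S * A = K := by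
    rw [← hKt, hK, transpose_mul, transpose_mul, hAt, hSt, hBt, mul_assoc]
  have hBSB : B * S * B = B - K := by
    have h : B * S * (A + B) = B := by
      rw [mul_assoc, nonsing_inv_mul _ hdAB, mul_one]
    rw [mul_add, hBSA] at h
    exact eq_sub_of_add_eq' h
  have hMM : (M⁻¹)ᵀ * M⁻¹ = S := by
    rw [hMit, ← Matrix.mul_inv_rev, ← sq, hM2]
  -- scalar computation
  have hMM2 : M⁻¹ * M⁻¹ = S := by rw [← hMM, hMit]
  rw [hKey, dp_helper M⁻¹ M⁻¹, hMM]
  simp only [mulVec_add, dotProduct_add, add_dotProduct, mulVec_mulVec, dp_helper,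
    hAt, hBt, hC₁it, hC₂it, ← mul_assoc]
  rw [show C₁⁻¹ * C₁⁻¹ = A from (sq C₁⁻¹).symm, show C₂⁻¹ * C₂⁻¹ = B from (sq C₂⁻¹).symm,
    hASA, hBSA, hBSB, ← hK]
  simp only [sub_mulVec, mulVec_sub, dotProduct_sub, sub_dotProduct, mulVec_add,
    dotProduct_add, add_dotProduct]
  ring
end

section
/- For σ₁ ≥ σ₂ > 0, the one-dimensional Gaussian kernels k^σ(x,y) = exp(−(x−y)²/σ²) on ℝ satisfy k^{σ₁} ⪯ (σ₁/σ₂)·k^{σ₂}. -/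
/-- `KerLE k₁ k₂` means `k₁ ⪯ k₂`. -/
def KerLE {S : Type*} (k₁ k₂ : S → S → ℝ) : Prop :=
  ∀ (n : ℕ) (α : Fin n → ℝ) (x : Fin n → S),
    ∑ i, ∑ j, α i * α j * k₁ (x i) (x j) ≤ ∑ i, ∑ j, α i * α j * k₂ (x i) (x j)

/-- One-dimensional Gaussian kernel with width `σ`. -/
noncomputable def gaussKer (σ : ℝ) : ℝ → ℝ → ℝ :=
  fun x y => Real.exp (-((x - y) ^ 2 / σ ^ 2))

open Real MeasureTheory
open scoped Real

lemma sqrt_complex_cpow {r : ℝ} (hr : 0 ≤ r) : ((r : ℂ)) ^ (1/2 : ℂ) = (Real.sqrt r : ℂ) := by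
  rw [Real.sqrt_eq_rpow, Complex.ofReal_cpow hr]
  norm_num

/-- The Fourier cosine transform of a Gaussian. -/
lemma cos_gauss_integral {a : ℝ} (ha : 0 < a) (t : ℝ) :
    ∫ ω : ℝ, Real.exp (-a * ω ^ 2) * Real.cos (t * ω)
      = Real.sqrt (π / a) * Real.exp (-(t ^ 2 / (4 * a))) := by
  have ha' : (0:ℝ) < ((a:ℂ)).re := by simpa using ha
  have h1 := fourierIntegral_gaussian ha' (t : ℂ)
  have hint : Integrable (fun x : ℝ => Complex.exp (Complex.I * t * x) * Complex.exp (-(a:ℂ) * x ^ 2)) := by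
    have h := integrable_cexp_quadratic (b := (a:ℂ)) ha' (Complex.I * t) 0
    apply h.congr
    filter_upwards with x
    rw [← Complex.exp_add]
    ring_nf
  have := congrArg Complex.re h1
  have h2 := integral_re hint
  simp only [RCLike.re_to_complex] at h2
  rw [← h2] at this
  have hL : ∀ ω : ℝ, (Complex.exp (Complex.I * t * ω) * Complex.exp (-(a:ℂ) * ω ^ 2)).re
      = Real.exp (-a * ω ^ 2) * Real.cos (t * ω) := by
    intro ω
    have e1 : (-(a:ℂ) * (ω:ℂ) ^ 2) = ((-a * ω ^ 2 : ℝ) : ℂ) := by push_cast; ring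
    have e2 : (Complex.I * t * ω) = ((t * ω : ℝ) : ℂ) * Complex.I := by push_cast; ring
    rw [e1, e2, ← Complex.ofReal_exp, mul_comm, Complex.re_ofReal_mul,
      Complex.exp_ofReal_mul_I_re]
  simp_rw [hL] at this
  rw [this]
  have hπa : (0:ℝ) ≤ π / a := by positivity
  have e3 : ((π : ℂ) / a) ^ (1/2 : ℂ) = ((Real.sqrt (π / a) : ℝ) : ℂ) := by
    rw [← sqrt_complex_cpow hπa]; push_cast; ring_nf
  have e4 : (-(t:ℂ) ^ 2 / (4 * a)) = ((-(t ^ 2 / (4 * a)) : ℝ) : ℂ) := by push_cast; ring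
  rw [e3, e4, ← Complex.ofReal_exp, ← Complex.ofReal_mul]
  exact Complex.ofReal_re _

section Main

variable {n : ℕ} (α x : Fin n → ℝ)

/-- The nonnegative "power spectrum" function. -/
noncomputable def Qfun (α x : Fin n → ℝ) (ω : ℝ) : ℝ :=
  (∑ i, α i * Real.cos (x i * ω)) ^ 2 + (∑ i, α i * Real.sin (x i * ω)) ^ 2

lemma Qfun_nonneg (ω : ℝ) : 0 ≤ Qfun α x ω := by unfold Qfun; positivity

lemma Qfun_expand (ω : ℝ) :
    Qfun α x ω = ∑ i, ∑ j, (α i * α j) * Real.cos ((x i - x j) * ω) := by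
  unfold Qfun
  rw [sq, sq, Finset.sum_mul_sum, Finset.sum_mul_sum, ← Finset.sum_add_distrib]
  refine Finset.sum_congr rfl fun i _ => ?_
  rw [← Finset.sum_add_distrib]
  refine Finset.sum_congr rfl fun j _ => ?_
  rw [sub_mul, Real.cos_sub]
  ring

lemma gauss_mul_Q (a ω : ℝ) :
    Real.exp (-a * ω ^ 2) * Qfun α x ω
      = ∑ i, ∑ j, (α i * α j) * (Real.exp (-a * ω ^ 2) * Real.cos ((x i - x j) * ω)) := by
  rw [Qfun_expand, Finset.mul_sum]
  refine Finset.sum_congr rfl fun i _ => ?_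
  rw [Finset.mul_sum]
  exact Finset.sum_congr rfl fun j _ => by ring

lemma term_integrable {a : ℝ} (ha : 0 < a) (t c : ℝ) :
    Integrable (fun ω : ℝ => c * (Real.exp (-a * ω ^ 2) * Real.cos (t * ω))) := by
  refine Integrable.const_mul ?_ c
  have h := (integrable_exp_neg_mul_sq ha).bdd_mul
    (f := fun ω : ℝ => Real.cos (t * ω))
    ((Real.continuous_cos.comp (continuous_const.mul continuous_id)).aestronglyMeasurable)
    (c := 1) (Filter.Eventually.of_forall fun ω => by simpa using Real.abs_cos_le_one (t * ω))
  apply h.congr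
  filter_upwards with ω using mul_comm _ _

lemma gauss_mul_Q_integrable {a : ℝ} (ha : 0 < a) :
    Integrable (fun ω : ℝ => Real.exp (-a * ω ^ 2) * Qfun α x ω) := by
  have : (fun ω : ℝ => Real.exp (-a * ω ^ 2) * Qfun α x ω)
      = fun ω => ∑ i, ∑ j, (α i * α j) * (Real.exp (-a * ω ^ 2) * Real.cos ((x i - x j) * ω)) := by
    funext ω; exact gauss_mul_Q α x a ω
  rw [this]
  exact integrable_finset_sum _ fun i _ =>
    integrable_finset_sum _ fun j _ => term_integrable ha _ _

lemma gauss_sum_repr {σ : ℝ} (hσ : 0 < σ) :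
    ∫ ω : ℝ, Real.exp (-(σ ^ 2 / 4) * ω ^ 2) * Qfun α x ω
      = (2 * Real.sqrt π / σ) * ∑ i, ∑ j, α i * α j * gaussKer σ (x i) (x j) := by
  have ha : (0:ℝ) < σ ^ 2 / 4 := by positivity
  have hpt : (fun ω : ℝ => Real.exp (-(σ ^ 2 / 4) * ω ^ 2) * Qfun α x ω)
      = fun ω => ∑ i, ∑ j, (α i * α j) *
          (Real.exp (-(σ ^ 2 / 4) * ω ^ 2) * Real.cos ((x i - x j) * ω)) := by
    funext ω; exact gauss_mul_Q α x _ ω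
  rw [hpt, integral_finset_sum _ fun i _ =>
    integrable_finset_sum _ fun j _ => term_integrable ha _ _,
    Finset.sum_congr rfl fun i (_ : i ∈ Finset.univ) =>
      integral_finset_sum _ fun j _ => term_integrable ha _ _]
  have hterm : ∀ i j : Fin n,
      ∫ ω : ℝ, (α i * α j) * (Real.exp (-(σ ^ 2 / 4) * ω ^ 2) * Real.cos ((x i - x j) * ω))
        = (2 * Real.sqrt π / σ) * (α i * α j * gaussKer σ (x i) (x j)) := by
    intro i j
    rw [integral_const_mul, cos_gauss_integral ha]
    have h4a : 4 * (σ ^ 2 / 4) = σ ^ 2 := by ring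
    have hsqrt : Real.sqrt (π / (σ ^ 2 / 4)) = 2 * Real.sqrt π / σ := by
      have hq : π / (σ ^ 2 / 4) = (2 * Real.sqrt π / σ) ^ 2 := by
        rw [div_pow, mul_pow, Real.sq_sqrt Real.pi_pos.le]
        field_simp
        ring
      rw [hq, Real.sqrt_sq (by positivity)]
    rw [h4a, hsqrt]
    unfold gaussKer
    ring
  rw [Finset.sum_congr rfl fun i _ => Finset.sum_congr rfl fun j _ => hterm i j]
  simp only [Finset.mul_sum]

end Main

theorem gauss_kernel_scalar_mono (σ₁ σ₂ : ℝ) (h₂ : 0 < σ₂) (h₁₂ : σ₂ ≤ σ₁) :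
    KerLE (gaussKer σ₁) (fun x y => (σ₁ / σ₂) * gaussKer σ₂ x y) := by
  intro n α x
  have h₁ : 0 < σ₁ := lt_of_lt_of_le h₂ h₁₂
  have ha₁ : (0:ℝ) < σ₁ ^ 2 / 4 := by positivity
  have ha₂ : (0:ℝ) < σ₂ ^ 2 / 4 := by positivity
  have hmono : ∫ ω : ℝ, Real.exp (-(σ₁ ^ 2 / 4) * ω ^ 2) * Qfun α x ω
      ≤ ∫ ω : ℝ, Real.exp (-(σ₂ ^ 2 / 4) * ω ^ 2) * Qfun α x ω := by
    refine integral_mono (gauss_mul_Q_integrable α x ha₁) (gauss_mul_Q_integrable α x ha₂) ?_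
    intro ω
    refine mul_le_mul_of_nonneg_right (Real.exp_le_exp.2 ?_) (Qfun_nonneg α x ω)
    have : σ₂ ^ 2 ≤ σ₁ ^ 2 := by nlinarith
    nlinarith [sq_nonneg ω]
  rw [gauss_sum_repr α x h₁, gauss_sum_repr α x h₂] at hmono
  have hsπ : 0 < Real.sqrt π := Real.sqrt_pos.2 Real.pi_pos
  have hgoal : ∑ i, ∑ j, α i * α j * gaussKer σ₁ (x i) (x j)
      ≤ (σ₁ / σ₂) * ∑ i, ∑ j, α i * α j * gaussKer σ₂ (x i) (x j) := by
    have hc : (0:ℝ) ≤ σ₁ / (2 * Real.sqrt π) := by positivity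
    have h3 := mul_le_mul_of_nonneg_left hmono hc
    calc ∑ i, ∑ j, α i * α j * gaussKer σ₁ (x i) (x j)
        = (σ₁ / (2 * Real.sqrt π)) *
            ((2 * Real.sqrt π / σ₁) * ∑ i, ∑ j, α i * α j * gaussKer σ₁ (x i) (x j)) := by
          field_simp
      _ ≤ (σ₁ / (2 * Real.sqrt π)) *
            ((2 * Real.sqrt π / σ₂) * ∑ i, ∑ j, α i * α j * gaussKer σ₂ (x i) (x j)) := h3
      _ = (σ₁ / σ₂) * ∑ i, ∑ j, α i * α j * gaussKer σ₂ (x i) (x j) := by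
          field_simp
  calc ∑ i, ∑ j, α i * α j * gaussKer σ₁ (x i) (x j)
      ≤ (σ₁ / σ₂) * ∑ i, ∑ j, α i * α j * gaussKer σ₂ (x i) (x j) := hgoal
    _ = ∑ i, ∑ j, α i * α j * ((σ₁ / σ₂) * gaussKer σ₂ (x i) (x j)) := by
        simp only [Finset.mul_sum]
        exact Finset.sum_congr rfl fun i _ =>
          Finset.sum_congr rfl fun j _ => by ring
end

section
/- Let A ∈ ℝ^{d×d}, B ∈ ℝ^{d×m}, and C ∈ ℝ^{d×d} symmetric positive definite. Define C_t² = e^{−At}(C² + 2Σ(t))e^{−Aᵀt} where Σ(t) = ∫₀ᵗ e^{As}BBᵀe^{Aᵀs}ds. Then C_t² ≥ C² (Loewner order) for all t ≥ 0 if and only if AC² + C²Aᵀ ≤ 2BBᵀ. -/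
open Matrix MeasureTheory

attribute [local instance] Matrix.linftyOpNormedAddCommGroup Matrix.linftyOpNormedRing
  Matrix.linftyOpNormedAlgebra

section AuxLoewner
open NormedSpace intervalIntegral Topology

variable {d m : ℕ}

noncomputable def quadCLM (x : Fin d → ℝ) : Matrix (Fin d) (Fin d) ℝ →L[ℝ] ℝ :=
  LinearMap.toContinuousLinearMap
    { toFun := fun M => x ⬝ᵥ M *ᵥ x
      map_add' := fun M N => by simp [Matrix.add_mulVec, dotProduct_add]
      map_smul' := fun c M => by simp [Matrix.smul_mulVec, dotProduct_smul] }

@[simp] lemma quadCLM_apply (x : Fin d → ℝ) (M : Matrix (Fin d) (Fin d) ℝ) :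
    quadCLM x M = x ⬝ᵥ M *ᵥ x := rfl

noncomputable def conjCLM (P Q : Matrix (Fin d) (Fin d) ℝ) :
    Matrix (Fin d) (Fin d) ℝ →L[ℝ] Matrix (Fin d) (Fin d) ℝ :=
  LinearMap.toContinuousLinearMap
    { toFun := fun M => P * M * Q
      map_add' := fun M N => by noncomm_ring
      map_smul' := fun c M => by simp [mul_smul_comm, smul_mul_assoc] }

@[simp] lemma conjCLM_apply (P Q M : Matrix (Fin d) (Fin d) ℝ) :
    conjCLM P Q M = P * M * Q := rfl

noncomputable def transCLM (d : ℕ) :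
    Matrix (Fin d) (Fin d) ℝ →L[ℝ] Matrix (Fin d) (Fin d) ℝ :=
  LinearMap.toContinuousLinearMap
    { toFun := fun M => Mᵀ
      map_add' := fun M N => Matrix.transpose_add M N
      map_smul' := fun c M => Matrix.transpose_smul c M }

@[simp] lemma transCLM_apply (M : Matrix (Fin d) (Fin d) ℝ) : transCLM d M = Mᵀ := rfl

lemma exp_smul_mul (A : Matrix (Fin d) (Fin d) ℝ) (a b : ℝ) :
    NormedSpace.exp (a • A) * NormedSpace.exp (b • A) = NormedSpace.exp ((a + b) • A) := by
  rw [add_smul, Matrix.exp_add_of_commute _ _ (((Commute.refl A).smul_left a).smul_right b)]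

lemma exp_smul_transpose (A : Matrix (Fin d) (Fin d) ℝ) (a : ℝ) :
    (NormedSpace.exp (a • A))ᵀ = NormedSpace.exp (a • Aᵀ) := by
  rw [← Matrix.transpose_smul, Matrix.exp_transpose]

lemma commute_exp_smul (A : Matrix (Fin d) (Fin d) ℝ) (a : ℝ) :
    Commute A (NormedSpace.exp (a • A)) :=
  ((Commute.refl A).smul_right a).exp_right

lemma continuous_expf (A : Matrix (Fin d) (Fin d) ℝ) (B : Matrix (Fin d) (Fin m) ℝ) :
    Continuous (fun s : ℝ => exp (s • A) * B * Bᵀ * exp (s • Aᵀ)) := by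
  have h1 : Continuous (fun s : ℝ => exp (s • A)) :=
    exp_continuous.comp (by continuity)
  have h2 : Continuous (fun s : ℝ => exp (s • Aᵀ)) :=
    exp_continuous.comp (by continuity)
  exact ((h1.matrix_mul continuous_const).matrix_mul continuous_const).matrix_mul h2

lemma conj_integral (A : Matrix (Fin d) (Fin d) ℝ) (B : Matrix (Fin d) (Fin m) ℝ) (t : ℝ) :
    exp ((-t) • A) * (∫ s in (0:ℝ)..t, exp (s • A) * B * Bᵀ * exp (s • Aᵀ)) *
        exp ((-t) • Aᵀ)
      = ∫ u in (-t)..(0:ℝ), exp (u • A) * B * Bᵀ * exp (u • Aᵀ) := by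
  have hint : IntervalIntegrable _ volume (0:ℝ) t :=
    (continuous_expf A B).intervalIntegrable 0 t
  calc exp ((-t) • A) * (∫ s in (0:ℝ)..t, exp (s • A) * B * Bᵀ * exp (s • Aᵀ)) *
        exp ((-t) • Aᵀ)
      = ∫ s in (0:ℝ)..t, exp ((-t) • A) * (exp (s • A) * B * Bᵀ * exp (s • Aᵀ)) *
          exp ((-t) • Aᵀ) :=
        ((conjCLM (exp ((-t) • A)) (exp ((-t) • Aᵀ))).intervalIntegral_comp_comm hint).symm
    _ = ∫ s in (0:ℝ)..t,
          (fun u => exp (u • A) * B * Bᵀ * exp (u • Aᵀ)) (s - t) := by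
        apply intervalIntegral.integral_congr
        intro s _
        have e1 : exp ((-t) • A) * exp (s • A) = exp ((s - t) • A) := by
          rw [exp_smul_mul, neg_add_eq_sub]
        have e2 : exp (s • Aᵀ) * exp ((-t) • Aᵀ) = exp ((s - t) • Aᵀ) := by
          rw [exp_smul_mul, ← sub_eq_add_neg]
        simp only [← e1, ← e2, Matrix.mul_assoc]
    _ = ∫ u in (0:ℝ) - t..t - t, exp (u • A) * B * Bᵀ * exp (u • Aᵀ) :=
        intervalIntegral.integral_comp_sub_right
          (fun u => exp (u • A) * B * Bᵀ * exp (u • Aᵀ)) t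
    _ = ∫ u in (-t)..(0:ℝ), exp (u • A) * B * Bᵀ * exp (u • Aᵀ) := by norm_num

lemma key_deriv (A : Matrix (Fin d) (Fin d) ℝ) (B : Matrix (Fin d) (Fin m) ℝ)
    (C : Matrix (Fin d) (Fin d) ℝ)
    (Ct2 : ℝ → Matrix (Fin d) (Fin d) ℝ)
    (hCt2' : ∀ t : ℝ, Ct2 t = exp ((-t) • A) * C ^ 2 * exp ((-t) • Aᵀ)
        + (2:ℝ) • ∫ u in (-t)..(0:ℝ), exp (u • A) * B * Bᵀ * exp (u • Aᵀ))
    (t : ℝ) :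
    HasDerivAt Ct2
      (exp ((-t) • A) * ((2:ℝ) • (B * Bᵀ) - (A * C ^ 2 + C ^ 2 * Aᵀ)) * exp ((-t) • Aᵀ))
      t := by
  have hfun : Ct2 = fun t => exp ((-t) • A) * C ^ 2 * exp ((-t) • Aᵀ)
      + (2:ℝ) • ∫ u in (-t)..(0:ℝ), exp (u • A) * B * Bᵀ * exp (u • Aᵀ) := funext hCt2'
  rw [hfun]
  set f : ℝ → Matrix (Fin d) (Fin d) ℝ :=
    fun u => exp (u • A) * B * Bᵀ * exp (u • Aᵀ) with hf
  have hE : HasDerivAt (fun t : ℝ => exp ((-t) • A)) (-(A * exp ((-t) • A))) t := by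
    have h := hasDerivAt_exp_smul_const' (𝕂 := ℝ) A (-t)
    have h2 := h.scomp t (hasDerivAt_neg t)
    simp [Function.comp_def] at h2
    simp
    exact h2
  have hET : HasDerivAt (fun t : ℝ => exp ((-t) • Aᵀ)) (-(exp ((-t) • Aᵀ) * Aᵀ)) t := by
    have h := hasDerivAt_exp_smul_const (𝕂 := ℝ) Aᵀ (-t)
    have h2 := h.scomp t (hasDerivAt_neg t)
    simp [Function.comp_def] at h2
    simp
    exact h2
  have hG : ∀ y : ℝ, HasDerivAt (fun y : ℝ => ∫ u in (0:ℝ)..y, f u) (f y) y := fun y =>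
    intervalIntegral.integral_hasDerivAt_right
      ((continuous_expf A B).intervalIntegrable 0 y)
      (by
        haveI : TopologicalSpace.PseudoMetrizableSpace (Matrix (Fin d) (Fin d) ℝ) :=
          inferInstanceAs (TopologicalSpace.PseudoMetrizableSpace (Fin d → Fin d → ℝ))
        exact (continuous_expf A B).stronglyMeasurableAtFilter volume (𝓝 y))
      (continuous_expf A B).continuousAt
  have hInt : HasDerivAt (fun t : ℝ => ∫ u in (-t)..(0:ℝ), f u) (f (-t)) t := by
    have h2 := ((hG (-t)).scomp t (hasDerivAt_neg t)).neg
    simp only [Function.comp_def, Pi.neg_def] at h2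
    have hfe : (fun x : ℝ => -∫ u in (0:ℝ)..(-x), f u)
        = fun x : ℝ => ∫ u in (-x)..(0:ℝ), f u := by
      funext s; rw [intervalIntegral.integral_symm, neg_neg]
    rw [hfe] at h2
    simp at h2
    exact h2
  have hC2 := (hE.mul_const (C ^ 2)).mul hET
  have htot := hC2.add (hInt.const_smul (2:ℝ))
  refine htot.congr_deriv ?_
  have c1 : A * exp ((-t) • A) = exp ((-t) • A) * A := (commute_exp_smul A (-t)).eq
  have c2 : Aᵀ * exp ((-t) • Aᵀ) = exp ((-t) • Aᵀ) * Aᵀ := (commute_exp_smul Aᵀ (-t)).eq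
  rw [hf]
  simp only [smul_sub, mul_sub, sub_mul, mul_add, add_mul, smul_mul_assoc, mul_smul_comm,
    neg_mul, mul_neg, c1, ← c2, ← Matrix.mul_assoc]
  abel

lemma quad_conj (P M : Matrix (Fin d) (Fin d) ℝ) (x : Fin d → ℝ) :
    x ⬝ᵥ (P * M * Pᵀ) *ᵥ x = (Pᵀ *ᵥ x) ⬝ᵥ M *ᵥ (Pᵀ *ᵥ x) := by
  rw [show P * M * Pᵀ = P * (M * Pᵀ) from Matrix.mul_assoc _ _ _, ← Matrix.mulVec_mulVec,
    Matrix.dotProduct_mulVec x P, ← Matrix.mulVec_transpose, Matrix.mulVec_mulVec]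

end AuxLoewner

open NormedSpace Topology Filter

theorem loewner_monotone_iff_lyapunov {d m : ℕ} (A : Matrix (Fin d) (Fin d) ℝ)
    (B : Matrix (Fin d) (Fin m) ℝ) (C : Matrix (Fin d) (Fin d) ℝ) (hC : C.PosDef)
    (hCsymm : C.IsSymm)
    (St : ℝ → Matrix (Fin d) (Fin d) ℝ)
    (hSt : ∀ t : ℝ, St t = ∫ s in (0:ℝ)..t,
        NormedSpace.exp (s • A) * B * Bᵀ * NormedSpace.exp (s • Aᵀ))
    (Ct2 : ℝ → Matrix (Fin d) (Fin d) ℝ)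
    (hCt2 : ∀ t : ℝ, Ct2 t =
      NormedSpace.exp ((-t) • A) * (C ^ 2 + (2:ℝ) • St t) * NormedSpace.exp ((-t) • Aᵀ)) :
    (∀ t : ℝ, 0 ≤ t → (Ct2 t - C ^ 2).PosSemidef) ↔
      ((2:ℝ) • (B * Bᵀ) - (A * C ^ 2 + C ^ 2 * Aᵀ)).PosSemidef := by
  set L : Matrix (Fin d) (Fin d) ℝ := (2:ℝ) • (B * Bᵀ) - (A * C ^ 2 + C ^ 2 * Aᵀ) with hLdef
  have hC2symm : (C ^ 2)ᵀ = C ^ 2 := by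
    rw [pow_two, Matrix.transpose_mul, hCsymm.eq]
  have hCt2' : ∀ t : ℝ, Ct2 t = exp ((-t) • A) * C ^ 2 * exp ((-t) • Aᵀ)
      + (2:ℝ) • ∫ u in (-t)..(0:ℝ), exp (u • A) * B * Bᵀ * exp (u • Aᵀ) := by
    intro t
    rw [hCt2 t, hSt t, ← conj_integral A B t]
    simp only [mul_add, add_mul, Matrix.mul_smul, Matrix.smul_mul]
  have hCt20 : Ct2 0 = C ^ 2 := by
    rw [hCt2' 0]
    simp [NormedSpace.exp_zero]
  have hderiv : ∀ (x : Fin d → ℝ) (t : ℝ),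
      HasDerivAt (fun s => x ⬝ᵥ Ct2 s *ᵥ x)
        ((exp ((-t) • Aᵀ) *ᵥ x) ⬝ᵥ L *ᵥ (exp ((-t) • Aᵀ) *ᵥ x)) t := by
    intro x t
    have h := (quadCLM x).hasFDerivAt.comp_hasDerivAt t (key_deriv A B C Ct2 hCt2' t)
    have h2 : (quadCLM x) (exp ((-t) • A) * L * exp ((-t) • Aᵀ))
        = (exp ((-t) • Aᵀ) *ᵥ x) ⬝ᵥ L *ᵥ (exp ((-t) • Aᵀ) *ᵥ x) := by
      rw [quadCLM_apply, ← exp_smul_transpose A (-t), quad_conj]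
    rw [← h2]
    simp [Function.comp_def] at h
    simp
    exact h
  constructor
  · intro H
    rw [Matrix.posSemidef_iff_dotProduct_mulVec]
    constructor
    · rw [Matrix.IsHermitian, Matrix.conjTranspose_eq_transpose_of_trivial, hLdef]
      simp only [Matrix.transpose_sub, Matrix.transpose_smul, Matrix.transpose_add,
        Matrix.transpose_mul, Matrix.transpose_transpose, hC2symm]
      rw [add_comm]
    · intro x
      have h0 : HasDerivAt (fun s => x ⬝ᵥ Ct2 s *ᵥ x) (x ⬝ᵥ L *ᵥ x) 0 := by
        simpa [NormedSpace.exp_zero] using hderiv x 0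
      have hslope := hasDerivAt_iff_tendsto_slope.mp h0
      have hmono : Tendsto (slope (fun s => x ⬝ᵥ Ct2 s *ᵥ x) 0) (𝓝[>] (0:ℝ))
          (𝓝 (x ⬝ᵥ L *ᵥ x)) :=
        hslope.mono_left (nhdsWithin_mono 0 (fun y hy => ne_of_gt hy))
      have hge : (0:ℝ) ≤ x ⬝ᵥ L *ᵥ x := by
        refine ge_of_tendsto hmono ?_
        filter_upwards [self_mem_nhdsWithin] with s hs
        have hs' : (0:ℝ) < s := hs
        rw [slope_def_field]
        apply div_nonneg _ (by linarith)
        have hpos := (H s hs'.le).dotProduct_mulVec_nonneg x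
        have heq : x ⬝ᵥ (Ct2 s) *ᵥ x - x ⬝ᵥ (Ct2 0) *ᵥ x
            = star x ⬝ᵥ (Ct2 s - C ^ 2) *ᵥ x := by
          simp [hCt20, Matrix.sub_mulVec, dotProduct_sub]
        show (0:ℝ) ≤ x ⬝ᵥ Ct2 s *ᵥ x - x ⬝ᵥ Ct2 0 *ᵥ x
        linarith [hpos, heq.ge, heq.le]
      simpa using hge
  · intro hL t ht
    rw [Matrix.posSemidef_iff_dotProduct_mulVec]
    constructor
    · have hIntT : ∀ r : ℝ, (∫ u in r..(0:ℝ), exp (u • A) * B * Bᵀ * exp (u • Aᵀ))ᵀ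
          = ∫ u in r..(0:ℝ), exp (u • A) * B * Bᵀ * exp (u • Aᵀ) := by
        intro r
        have hint : IntervalIntegrable _ MeasureTheory.volume r (0:ℝ) :=
          (continuous_expf A B).intervalIntegrable r 0
        have h := (transCLM d).intervalIntegral_comp_comm hint
        rw [show (∫ u in r..(0:ℝ), exp (u • A) * B * Bᵀ * exp (u • Aᵀ))ᵀ
            = transCLM d (∫ u in r..(0:ℝ), exp (u • A) * B * Bᵀ * exp (u • Aᵀ)) from rfl]
        refine Eq.trans h.symm ?_
        apply intervalIntegral.integral_congr
        intro u _
        have e1 : (exp (u • Aᵀ))ᵀ = exp (u • A) := by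
          rw [exp_smul_transpose, Matrix.transpose_transpose]
        have e2 : (exp (u • A))ᵀ = exp (u • Aᵀ) := exp_smul_transpose A u
        change (exp (u • A) * B * Bᵀ * exp (u • Aᵀ))ᵀ = _
        simp [Matrix.transpose_mul, e1, e2, Matrix.mul_assoc]
      have hCt2T : (Ct2 t)ᵀ = Ct2 t := by
        rw [hCt2' t]
        have e1 : (exp ((-t) • Aᵀ))ᵀ = exp ((-t) • A) := by
          rw [exp_smul_transpose, Matrix.transpose_transpose]
        have e2 : (exp ((-t) • A))ᵀ = exp ((-t) • Aᵀ) := exp_smul_transpose A (-t)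
        rw [Matrix.transpose_add, Matrix.transpose_smul, hIntT (-t), Matrix.transpose_mul,
          Matrix.transpose_mul, e1, e2, hC2symm, Matrix.mul_assoc]
      rw [Matrix.IsHermitian, Matrix.conjTranspose_eq_transpose_of_trivial,
        Matrix.transpose_sub, hCt2T, hC2symm]
    · intro x
      have hdiff : Differentiable ℝ (fun s => x ⬝ᵥ Ct2 s *ᵥ x) :=
        fun s => (hderiv x s).differentiableAt
      have hd' : ∀ s, 0 ≤ deriv (fun s => x ⬝ᵥ Ct2 s *ᵥ x) s := by
        intro s
        rw [(hderiv x s).deriv]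
        simpa using hL.dotProduct_mulVec_nonneg (exp ((-s) • Aᵀ) *ᵥ x)
      have hmono := monotone_of_deriv_nonneg hdiff hd' ht
      have heq : star x ⬝ᵥ (Ct2 t - C ^ 2) *ᵥ x
          = (x ⬝ᵥ Ct2 t *ᵥ x) - (x ⬝ᵥ Ct2 0 *ᵥ x) := by
        simp [hCt20, Matrix.sub_mulVec, dotProduct_sub]
      rw [heq]
      exact sub_nonneg.mpr hmono
end
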